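/- Let n ≥ 1 be an integer and k_1,...,k_n nonnegative reals, extended periodically by k_{r+n} = k_r. Let ψ(j) = Σ_{ℓ=1}^{j} k_ℓ (with ψ(0)=0) and fix a real m > ψ(n). Let N be the number of indices j ∈ {0,1,...,n-1} such that ψ(j+r) − ψ(j) < (m/n)·r for all r = 1,...,n. Then N ≥ ⌈n(1 − ψ(n)/m)⌉. -/

import Mathlib

open scoped Classical

/-- Cyclic Ballot Theorem (Proposition `th-ballot`). -/
theorem cyclic_ballot (n : ℕ) (hn : 1 ≤ n) (k : ℕ → ℝ)
    (hk : ∀ r, 0 ≤ k r) (hper : ∀ r, k (r + n) = k r)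
    (ψ : ℕ → ℝ) (hψ : ∀ j, ψ j = ∑ ℓ ∈ Finset.Icc 1 j, k ℓ)
    (m : ℝ) (hm : ψ n < m)
    (N : ℕ)
    (hN : N = Finset.card ((Finset.range n).filter (fun j =>
      ∀ r ∈ Finset.Icc 1 n, ψ (j + r) - ψ j < (m / n) * r))) :
    (⌈(n : ℝ) * (1 - ψ n / m)⌉ : ℤ) ≤ (N : ℤ) := by
  have hn0 : 0 < n := hn
  have hnR : (0:ℝ) < n := by exact_mod_cast hn0
  have hψ0 : ψ 0 = 0 := by simp [hψ]
  have hψn0 : 0 ≤ ψ n := by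
    rw [hψ]; exact Finset.sum_nonneg fun _ _ => hk _
  have hm0 : 0 < m := lt_of_le_of_lt hψn0 hm
  have hm' : m ≠ 0 := ne_of_gt hm0
  set c : ℝ := m / n with hc
  have hc0 : 0 < c := div_pos hm0 hnR
  have hcn : c * n = m := div_mul_cancel₀ m (ne_of_gt hnR)
  set d : ℝ := m - ψ n with hd
  have hd0 : 0 < d := sub_pos.mpr hm
  set f : ℕ → ℝ := fun t => ψ t - c * t with hf
  have hstep : ∀ j, ψ (j + 1) = ψ j + k (j + 1) := by
    intro j
    rw [hψ, hψ, Finset.sum_Icc_succ_top (Nat.le_add_left 1 j)]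
  have hψadd : ∀ t, ψ (t + n) = ψ t + ψ n := by
    intro t
    induction t with
    | zero => simp [hψ0]
    | succ t ih =>
      have h1 : t + 1 + n = (t + n) + 1 := by omega
      rw [h1, hstep, ih, hstep]
      have h2 : k (t + n + 1) = k (t + 1) := by
        have h3 := hper (t + 1)
        rw [show t + 1 + n = t + n + 1 by omega] at h3
        exact h3
      rw [h2]; ring
  have hfadd : ∀ t, f (t + n) = f t - d := by
    intro t
    simp only [hf]
    rw [hψadd]
    push_cast
    linear_combination -hcn
  have hfmul : ∀ q t, f (t + q * n) = f t - q * d := by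
    intro q
    induction q with
    | zero => simp
    | succ q ih =>
      intro t
      have h1 : t + (q + 1) * n = (t + q * n) + n := by ring
      rw [h1, hfadd, ih]
      push_cast
      ring
  have hfstep : ∀ t, f t - c ≤ f (t + 1) := by
    intro t
    simp only [hf]
    rw [hstep]
    push_cast
    have := hk (t + 1)
    nlinarith
  have hfw : ∀ j r : ℕ, (f (j + r) < f j ↔ ψ (j + r) - ψ j < c * r) := by
    intro j r
    simp only [hf]
    push_cast
    constructor <;> intro h <;> nlinarith
  have hRecadd : ∀ t, (∀ r, 1 ≤ r → f (t + n + r) < f (t + n)) ↔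
      (∀ r, 1 ≤ r → f (t + r) < f t) := by
    intro t
    have key : ∀ r, f (t + n + r) = f (t + r) - d := by
      intro r; rw [show t + n + r = (t + r) + n by omega, hfadd]
    constructor <;> intro h r hr
    · have h1 := h r hr; rw [key r, hfadd] at h1; linarith
    · rw [key r, hfadd]; have h1 := h r hr; linarith
  have hRecmul : ∀ q t, (∀ r, 1 ≤ r → f (t + q * n + r) < f (t + q * n)) ↔
      (∀ r, 1 ≤ r → f (t + r) < f t) := by
    intro q
    induction q with
    | zero => intro t; simp
    | succ q ih =>
      intro t
      have h1 : t + (q + 1) * n = (t + q * n) + n := by ring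
      rw [h1, hRecadd (t + q * n)]
      exact ih t
  have hRecmod : ∀ t, (∀ r, 1 ≤ r → f (t + r) < f t) →
      (∀ r, 1 ≤ r → f (t % n + r) < f (t % n)) := by
    intro t h
    have h1 : t % n + (t / n) * n = t := by
      have h2 := Nat.mod_add_div t n
      calc t % n + (t / n) * n = t % n + n * (t / n) := by ring
        _ = t := h2
    have h3 := hRecmul (t / n) (t % n)
    rw [h1] at h3
    exact h3.mp h
  -- existence of a record in any window of length n
  have hrecord : ∀ a, ∃ t, a ≤ t ∧ t < a + n ∧ f a ≤ f t ∧
      (∀ r, 1 ≤ r → f (t + r) < f t) := by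
    intro a
    set s := Finset.Ico a (a + n) with hs
    have hsne : s.Nonempty := by rw [hs, Finset.nonempty_Ico]; omega
    obtain ⟨t0, ht0s, ht0max⟩ := s.exists_max_image f hsne
    set s' := s.filter (fun u => f t0 ≤ f u) with hs'
    have hs'ne : s'.Nonempty := ⟨t0, by simp [hs', ht0s]⟩
    set t := s'.max' hs'ne with htdef
    have hts' : t ∈ s' := s'.max'_mem hs'ne
    have hts : t ∈ s := (Finset.mem_filter.mp hts').1
    have htval : f t = f t0 :=
      le_antisymm (ht0max t hts) (Finset.mem_filter.mp hts').2
    have hlast : ∀ u ∈ s, t < u → f u < f t := by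
      intro u hu htu
      by_contra hcon
      push_neg at hcon
      have hu' : u ∈ s' := Finset.mem_filter.mpr ⟨hu, by rw [htval] at hcon; linarith⟩
      exact absurd (Finset.le_max' s' u hu') (by omega)
    obtain ⟨hta, htn⟩ := Finset.mem_Ico.mp hts
    refine ⟨t, hta, htn, ?_, ?_⟩
    · rw [htval]; exact ht0max a (Finset.mem_Ico.mpr ⟨le_refl a, by omega⟩)
    intro r hr
    set x := (t + r - a) % n with hx
    set y := (t + r - a) / n with hy
    have hxy : x + n * y = t + r - a := Nat.mod_add_div _ _
    have hxlt : x < n := Nat.mod_lt _ hn0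
    have hau : a ≤ t + r := le_trans hta (Nat.le_add_right _ _)
    have huv : (a + x) + y * n = t + r := by
      have h1 : (a + x) + y * n = a + (x + n * y) := by ring
      rw [h1, hxy, Nat.add_sub_cancel' hau]
    have hvm : a + x ∈ s := Finset.mem_Ico.mpr ⟨Nat.le_add_right _ _, by omega⟩
    have hfv : f (a + x) ≤ f t := by rw [htval]; exact ht0max _ hvm
    rcases Nat.eq_zero_or_pos y with hy0 | hy1
    · rw [hy0, zero_mul, add_zero] at huv
      rw [← huv]
      exact hlast (a + x) hvm (by omega)
    · have h1 : f (t + r) = f (a + x) - y * d := by rw [← huv]; exact hfmul y (a + x)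
      rw [h1]
      have hyd : d ≤ (y:ℝ) * d := by
        have h2 : (1:ℝ) ≤ y := by exact_mod_cast hy1
        nlinarith
      linarith
  obtain ⟨t₀, ht₀a, ht₀n, _, ht₀rec⟩ := hrecord 0
  -- the "next record" function
  have hnext : ∀ v, ∃ w, (∀ r, 1 ≤ r → f (v + r) < f v) →
      (v < w ∧ (∀ r, 1 ≤ r → f (w + r) < f w) ∧ f v - c ≤ f w) := by
    intro v
    obtain ⟨t, ht1, ht2, ht3, ht4⟩ := hrecord (v + 1)
    exact ⟨t, fun _ => ⟨by omega, ht4, le_trans (hfstep v) ht3⟩⟩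
  choose next hnextspec using hnext
  obtain ⟨u, hu0, husucc⟩ : ∃ u : ℕ → ℕ, u 0 = t₀ ∧ ∀ i, u (i + 1) = next (u i) :=
    ⟨fun i => next^[i] t₀, rfl, fun i => Function.iterate_succ_apply' next i t₀⟩
  have hurec : ∀ i, ∀ r, 1 ≤ r → f (u i + r) < f (u i) := by
    intro i
    induction i with
    | zero => rw [hu0]; exact ht₀rec
    | succ i ih => rw [husucc]; exact (hnextspec (u i) ih).2.1
  have hult : ∀ i, u i < u (i + 1) := by
    intro i; rw [husucc]; exact (hnextspec (u i) (hurec i)).1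
  have humono : StrictMono u := strictMono_nat_of_lt_succ hult
  have huge : ∀ i, t₀ + i ≤ u i := by
    intro i
    induction i with
    | zero => simp [hu0]
    | succ i ih => have := hult i; omega
  have huval : ∀ i, f t₀ - i * c ≤ f (u i) := by
    intro i
    induction i with
    | zero => simp [hu0]
    | succ i ih =>
      have h1 : f (u i) - c ≤ f (u (i + 1)) := by
        rw [husucc]; exact (hnextspec (u i) (hurec i)).2.2
      push_cast
      push_cast at ih
      linarith
  have hex : ∃ i, t₀ + n ≤ u i := ⟨n, huge n⟩
  set L := Nat.find hex with hL
  have hLspec : t₀ + n ≤ u L := Nat.find_spec hex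
  have hLmin : ∀ i, i < L → u i < t₀ + n := by
    intro i hi
    have := Nat.find_min hex hi
    omega
  -- total drop bound
  have hdrop : d ≤ L * c := by
    have h1 : f (u L) ≤ f (t₀ + n) := by
      rcases Nat.eq_or_lt_of_le hLspec with h | h
      · rw [h]
      · have hrec := (hRecadd t₀).mpr ht₀rec
        have h2 := hrec (u L - (t₀ + n)) (by omega)
        rw [show t₀ + n + (u L - (t₀ + n)) = u L by omega] at h2
        exact le_of_lt h2
    have h2 := huval L
    rw [hfadd t₀] at h1
    linarith
  -- counting: L ≤ N
  have hLN : L ≤ N := by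
    have key : ∀ a b : ℕ, a < L → b < L → a < b → u a % n = u b % n → False := by
      intro a b ha hb hab hmod
      have h1 : u a < u b := humono hab
      have h2 : t₀ ≤ u a := by have := huge a; omega
      have h3 : u b < t₀ + n := hLmin b hb
      have hmod' : u a ≡ u b [MOD n] := hmod
      have hdvd : n ∣ u b - u a := (Nat.modEq_iff_dvd' (le_of_lt h1)).mp hmod'
      have := Nat.le_of_dvd (by omega) hdvd
      omega
    rw [hN, ← Finset.card_range L]
    apply Finset.card_le_card_of_injOn (fun i => u i % n)
    · intro i hi
      simp only [Finset.mem_coe, Finset.mem_filter, Finset.mem_range]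
      refine ⟨Nat.mod_lt _ hn0, ?_⟩
      intro r hr
      have hrec := hRecmod (u i) (hurec i)
      have h1 := hrec r (Finset.mem_Icc.mp hr).1
      exact (hfw (u i % n) r).mp h1
    · intro i hi j hj hij
      simp only [Finset.coe_range, Set.mem_Iio] at hi hj
      have hij' : u i % n = u j % n := hij
      rcases lt_trichotomy i j with h | h | h
      · exact absurd (key i j hi hj h hij') (by simp)
      · exact h
      · exact absurd (key j i hj hi h hij'.symm) (by simp)
  -- conclude
  have hfinal : (n:ℝ) * (1 - ψ n / m) ≤ (N:ℝ) := by
    have h1 : d * n ≤ (L:ℝ) * m := by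
      have h0 := mul_le_mul_of_nonneg_right hdrop (le_of_lt hnR)
      calc d * n ≤ (L * c) * n := h0
        _ = (L:ℝ) * (c * n) := by ring
        _ = (L:ℝ) * m := by rw [hcn]
    have h2 : (n:ℝ) * (1 - ψ n / m) = d * n / m := by
      rw [hd]; field_simp
    rw [h2, div_le_iff₀ hm0]
    have hLN' : (L:ℝ) ≤ N := by exact_mod_cast hLN
    nlinarith
  exact Int.ceil_le.mpr (by exact_mod_cast hfinal)
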